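/- For every k ≥ 4, the directed circuit Ck on vertices v1,...,vk with arcs v_i v_{i+1} (1 ≤ i < k) and v_k v_1 has a graceful difference labeling. -/

import Mathlib

set_option maxHeartbeats 1000000

/-- Cyclic successor on `Fin k`. -/
def cyc (k : ℕ) (hk : 0 < k) (i : Fin k) : Fin k := ⟨(i.val + 1) % k, Nat.mod_lt _ hk⟩

/-- `f` is a graceful difference labeling of the digraph with arc set `A`:
`f` is a bijection from the vertices onto `{1,…,|V|}` and the arc labels
`f v - f u` are pairwise distinct. -/
def IsGdlOn {V : Type} [Fintype V] (A : Set (V × V)) (f : V → ℤ) : Prop :=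
  Set.BijOn f Set.univ (Set.Icc 1 (Fintype.card V : ℤ)) ∧
  Set.InjOn (fun a : V × V => f a.2 - f a.1) A

/-- Arc set of the directed circuit on `Fin k`. -/
def circuitArcs (k : ℕ) (hk : 0 < k) : Set (Fin k × Fin k) :=
  Set.range (fun i => (i, cyc k hk i))

lemma isGdlOn_of (k : ℕ) (hk : 0 < k) (f : Fin k → ℤ)
    (hmem : ∀ i, 1 ≤ f i ∧ f i ≤ k)
    (hinj : Function.Injective f)
    (hd : ∀ i j : Fin k, f (cyc k hk i) - f i = f (cyc k hk j) - f j → i = j) :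
    IsGdlOn (circuitArcs k hk) f := by
  constructor
  · refine ⟨fun i _ => ⟨(hmem i).1, by simpa using (hmem i).2⟩,
      fun a _ b _ h => hinj h, ?_⟩
    have himg : f '' Set.univ ⊆ Set.Icc 1 (k:ℤ) := by
      rintro x ⟨i, -, rfl⟩
      exact ⟨(hmem i).1, (hmem i).2⟩
    have hcard : (Set.Icc (1:ℤ) k).ncard ≤ (f '' Set.univ).ncard := by
      rw [Set.ncard_image_of_injective _ hinj, Set.ncard_univ]
      rw [← Finset.coe_Icc, Set.ncard_coe_finset, Int.card_Icc]
      simp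
    have := Set.eq_of_subset_of_ncard_le himg hcard (Set.finite_Icc _ _)
    simp only [Fintype.card_fin]
    rw [← this]
    exact Set.Subset.refl _
  · rintro a ⟨i, rfl⟩ b ⟨j, rfl⟩ h
    simp only at h
    exact congrArg (fun i => (i, cyc k hk i)) (hd i j h)

/-! ### Construction A : zigzag, for `k % 4 ∈ {1, 2}` -/

def gA (k n : ℕ) : ℤ := if n % 2 = 0 then 1 + (n / 2 : ℕ) else (k : ℤ) - (n / 2 : ℕ)

lemma gA_mem (k : ℕ) (hk : 4 ≤ k) (n : ℕ) (hn : n < k) :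
    1 ≤ gA k n ∧ gA k n ≤ k := by
  simp only [gA]; split_ifs <;> omega

lemma gA_inj (k : ℕ) (hk : 4 ≤ k) (n m : ℕ) (hn : n < k) (hm : m < k)
    (h : gA k n = gA k m) : n = m := by
  simp only [gA] at h; split_ifs at h <;> omega

lemma dA_inj (k : ℕ) (hk : 4 ≤ k) (h4 : k % 4 = 1 ∨ k % 4 = 2)
    (n m : ℕ) (hn : n < k) (hm : m < k)
    (h : gA k ((n+1) % k) - gA k n = gA k ((m+1) % k) - gA k m) : n = m := by
  have e1 : (n + 1) % k = if n + 1 = k then 0 else n + 1 := by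
    split
    · simp [*]
    · exact Nat.mod_eq_of_lt (by omega)
  have e2 : (m + 1) % k = if m + 1 = k then 0 else m + 1 := by
    split
    · simp [*]
    · exact Nat.mod_eq_of_lt (by omega)
  rw [e1, e2] at h
  simp only [gA] at h
  split_ifs at h <;> omega

/-! ### Construction B : zigzag on `{3,…,k-2}` followed by `2, k-1, 1, k`,
for `k % 4 ∈ {0, 3}`, `k ≥ 7` -/

def gB (k n : ℕ) : ℤ :=
  if n = k-4 then 2 else if n = k-3 then (k:ℤ)-1 else if n = k-2 then 1
  else if n = k-1 then (k:ℤ)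
  else if n % 2 = 0 then 3 + (n / 2 : ℕ) else (k : ℤ) - 2 - (n / 2 : ℕ)

def dB (k n : ℕ) : ℤ :=
  if n + 5 < k then (if n % 2 = 0 then (k:ℤ)-5-n else (n:ℤ)+5-k)
  else if n = k-5 then (if n % 2 = 0 then -1-(n / 2 : ℕ) else 4+(n / 2 : ℕ)-(k:ℤ))
  else if n = k-4 then (k:ℤ)-3
  else if n = k-3 then 2-(k:ℤ)
  else if n = k-2 then (k:ℤ)-1
  else 3-(k:ℤ)

lemma d_eqB (k : ℕ) (hk : 7 ≤ k) (n : ℕ) (hn : n < k) :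
    gB k ((n+1) % k) - gB k n = dB k n := by
  have e1 : (n + 1) % k = if n + 1 = k then 0 else n + 1 := by
    split
    · simp [*]
    · exact Nat.mod_eq_of_lt (by omega)
  rw [e1]
  simp only [gB, dB]
  split_ifs <;> omega

lemma dB_inj (k : ℕ) (hk : 7 ≤ k) (h4 : k % 4 = 0 ∨ k % 4 = 3)
    (n m : ℕ) (hn : n < k) (hm : m < k) (h : dB k n = dB k m) : n = m := by
  simp only [dB] at h
  split_ifs at h <;> omega

lemma gB_inj (k : ℕ) (hk : 7 ≤ k)
    (n m : ℕ) (hn : n < k) (hm : m < k) (h : gB k n = gB k m) : n = m := by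
  simp only [gB] at h
  split_ifs at h <;> omega

lemma gB_mem (k : ℕ) (hk : 7 ≤ k) (n : ℕ) (hn : n < k) :
    1 ≤ gB k n ∧ gB k n ≤ k := by
  simp only [gB]
  split_ifs <;> omega

/-- For every `k ≥ 4`, the directed circuit `C_k` has a graceful difference labeling. -/
theorem stmt_4 (k : ℕ) (hk : 4 ≤ k) :
    ∃ f : Fin k → ℤ, IsGdlOn (circuitArcs k (by omega)) f := by
  have hk0 : 0 < k := by omega
  by_cases hA : k % 4 = 1 ∨ k % 4 = 2
  · refine ⟨fun i => gA k i.val, isGdlOn_of k (by omega) _ ?_ ?_ ?_⟩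
    · exact fun i => gA_mem k hk i.val i.isLt
    · exact fun i j h => Fin.ext (gA_inj k hk i.val j.val i.isLt j.isLt h)
    · intro i j h
      simp only [cyc] at h
      exact Fin.ext (dA_inj k hk hA i.val j.val i.isLt j.isLt h)
  · by_cases h4 : k = 4
    · subst h4
      exact ⟨![1, 2, 4, 3], isGdlOn_of 4 (by decide) _ (by decide) (by decide) (by decide)⟩
    · have hB : k % 4 = 0 ∨ k % 4 = 3 := by omega
      have hk7 : 7 ≤ k := by omega
      refine ⟨fun i => gB k i.val, isGdlOn_of k (by omega) _ ?_ ?_ ?_⟩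
      · exact fun i => gB_mem k hk7 i.val i.isLt
      · exact fun i j h => Fin.ext (gB_inj k hk7 i.val j.val i.isLt j.isLt h)
      · intro i j h
        simp only [cyc] at h
        rw [d_eqB k hk7 i.val i.isLt, d_eqB k hk7 j.val j.isLt] at h
        exact Fin.ext (dB_inj k hk7 hB i.val j.val i.isLt j.isLt h)
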